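/- Let p ≥ 2 be a natural number, m ≥ 1, and let S ≥ m·p² and R be positive integers with gcd(R, S) = 1, and let R' satisfy R'·R ≡ 1 (mod S). Let a₁, …, a_m and c₁, …, c_m be natural numbers all strictly less than p. Then ((R' · (∑_{j=1}^m c_j · ((R · a_j) mod S))) mod S) mod p = (∑_{j=1}^m c_j · a_j) mod p. -/
import Mathlib


/-- Core decryption-correctness of HPPK over a hidden ring: with `S ≥ m·p²`,
decrypting a linear combination (with weights `c j < p`) of ciphertexts of
plaintexts `a j < p` and reducing mod `p` recovers the linear combination mod `p`. -/
theorem stmt_2 (p m S R R' : ℕ) (hp : 2 ≤ p) (hm : 1 ≤ m)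
    (hS : m * p ^ 2 ≤ S) (hSpos : 0 < S) (hRpos : 0 < R)
    (hgcd : Nat.gcd R S = 1) (hinv : R' * R ≡ 1 [MOD S])
    (a c : Fin m → ℕ) (ha : ∀ j, a j < p) (hc : ∀ j, c j < p) :
    ((R' * ∑ j, c j * ((R * a j) % S)) % S) % p = (∑ j, c j * a j) % p := by
  have hsum : (∑ j, c j * ((R * a j) % S)) ≡ (∑ j, c j * (R * a j)) [MOD S] := by
    unfold Nat.ModEq
    rw [Finset.sum_nat_mod, Finset.sum_nat_mod (f := fun j => c j * (R * a j))]
    congr 1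
    exact Finset.sum_congr rfl fun j _ => by simp [Nat.mul_mod]
  have h2 : (∑ j, c j * (R * a j)) = R * ∑ j, c j * a j := by
    rw [Finset.mul_sum]
    exact Finset.sum_congr rfl fun j _ => by ring
  have h3 : R' * (∑ j, c j * ((R * a j) % S)) ≡ (∑ j, c j * a j) [MOD S] := by
    calc R' * (∑ j, c j * ((R * a j) % S))
        ≡ R' * (∑ j, c j * (R * a j)) [MOD S] := hsum.mul_left _
      _ = (R' * R) * ∑ j, c j * a j := by rw [h2]; ring
      _ ≡ 1 * ∑ j, c j * a j [MOD S] := hinv.mul_right _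
      _ = ∑ j, c j * a j := one_mul _
  have hlt : (∑ j, c j * a j) < S := by
    calc (∑ j, c j * a j) < ∑ _j : Fin m, p ^ 2 := by
          apply Finset.sum_lt_sum_of_nonempty
          · exact Finset.univ_nonempty_iff.mpr (Fin.pos_iff_nonempty.mp hm)
          · intro j _
            calc c j * a j < p * p := Nat.mul_lt_mul_of_lt_of_lt (hc j) (ha j)
              _ = p ^ 2 := (sq p).symm
      _ = m * p ^ 2 := by simp [Finset.sum_const, Finset.card_univ, mul_comm]
      _ ≤ S := hS
  have : (R' * ∑ j, c j * ((R * a j) % S)) % S = (∑ j, c j * a j) := by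
    rw [h3]; exact Nat.mod_eq_of_lt hlt
  rw [this]
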